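/- Let H be a finite dimensional hereditary algebra with an exceptional module N (Ext¹(N,N) = 0), P a projective H-module, and tP = t_N(P) the trace of N in P. Then Ext¹(N, tP) = 0; consequently the natural map Hom(N, P) → Hom(N, P/tP) has image 0, so Hom(N, P/tP) = 0. -/

import Mathlib

open CategoryTheory

/-- `Ext¹` of modules, as an abelian group (`ℤ`-module). -/
noncomputable def ext1 (Λ : Type) [Ring Λ] (M N : ModuleCat Λ) : ModuleCat ℤ :=
  ((Ext ℤ (ModuleCat Λ) 1).obj (Opposite.op M)).obj N

/-- The trace of `N` in `P`: the sum of the images of all maps `N → P`. -/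
noncomputable def traceSub (Λ : Type) [Ring Λ] (N P : ModuleCat Λ) : Submodule Λ P :=
  ⨆ g : N →ₗ[Λ] P, LinearMap.range g

open CategoryTheory Limits ZeroObject

noncomputable section TwoStep

set_option linter.unusedSectionVars false

variable {C : Type u} [Category.{v} C] [Abelian C] [Linear ℤ C] [EnoughProjectives C]
variable {K F N : C}

/-- Two-term chain complex `... → 0 → K → F`. -/
def twoComplex (d : K ⟶ F) : ChainComplex C ℕ :=
  ChainComplex.of (fun n => match n with | 0 => F | 1 => K | _ => 0)
    (fun n => match n with | 0 => d | _ => 0)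
    (fun n => match n with | 0 => zero_comp | _ => zero_comp)

variable (d : K ⟶ F) (p : F ⟶ N)

lemma twoComplex_d10 : (twoComplex d).d 1 0 = d := by simp [twoComplex]; exact ChainComplex.of_d _ _ 0

lemma twoComplex_d21 : (twoComplex d).d 2 1 = 0 := by simp [twoComplex]; exact ChainComplex.of_d _ _ 1

lemma twoComplex_X_isZero (n : ℕ) : IsZero ((twoComplex d).X (n + 2)) := isZero_zero C

/-- A projective resolution of length one. -/
def twoRes [Mono d] [Epi p] (hdp : d ≫ p = 0)
    (hex : (ShortComplex.mk d p hdp).Exact)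
    (hK : Projective K) (hF : Projective F) : ProjectiveResolution N where
  complex := twoComplex d
  projective := fun n => match n with
    | 0 => hF
    | 1 => hK
    | (_ + 2) => CategoryTheory.Projective.zero_projective.of_iso
        ((twoComplex_X_isZero d _).isoZero).symm
  π := (ChainComplex.toSingle₀Equiv _ _).symm
        ⟨p, by rw [twoComplex_d10]; exact hdp⟩
  quasiIso := ⟨fun n => by
    cases n with
    | zero =>
      rw [ChainComplex.quasiIsoAt₀_iff, ShortComplex.quasiIso_iff_of_zeros']
      · refine (ShortComplex.exact_and_epi_g_iff_of_iso ?_).2 ⟨hex, inferInstance⟩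
        exact ShortComplex.isoMk (Iso.refl _) (Iso.refl _) (Iso.refl _)
          (by erw [Category.id_comp, Category.comp_id]; exact (twoComplex_d10 d).symm) (by erw [Category.id_comp, Category.comp_id]; exact (ChainComplex.toSingle₀Equiv_symm_apply_f_zero (C := twoComplex d) p (by rw [twoComplex_d10]; exact hdp)).symm)
      all_goals rfl
    | succ n =>
      rw [quasiIsoAt_iff_exactAt']
      · cases n with
        | zero =>
          rw [HomologicalComplex.exactAt_iff' _ 2 1 0 (by simp) (by simp)]
          apply (ShortComplex.exact_iff_mono _ ?_).2
          · show Mono ((twoComplex d).d 1 0)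
            rw [twoComplex_d10]; exact ‹Mono d›
          · exact twoComplex_d21 d
        | succ n =>
          rw [HomologicalComplex.exactAt_iff' _ (n+3) (n+2) (n+1) (by simp) (by simp)]
          exact ShortComplex.exact_of_isZero_X₂ _ (twoComplex_X_isZero d n)
      · apply ChainComplex.exactAt_succ_single_obj⟩

lemma isZero_ext1_iff [Mono d] [Epi p] (hdp : d ≫ p = 0)
    (hex : (ShortComplex.mk d p hdp).Exact) (hK : Projective K) (hF : Projective F) (Y : C) :
    IsZero (((Ext ℤ C 1).obj (Opposite.op N)).obj Y) ↔
      ∀ φ : K ⟶ Y, ∃ ψ : F ⟶ Y, d ≫ ψ = φ := by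
  let P : ProjectiveResolution N := twoRes d p hdp hex hK hF
  let e := P.isoExt (R := ℤ) 1 Y
  set L := P.complex.linearYonedaObj ℤ Y with hL
  have h1 : IsZero (((Ext ℤ C 1).obj (Opposite.op N)).obj Y) ↔ L.ExactAt 1 := by
    rw [HomologicalComplex.exactAt_iff_isZero_homology]
    exact ⟨fun h => h.of_iso e.symm, fun h => h.of_iso e⟩
  have hz : IsZero (L.X 2) := by
    have hs : Subsingleton (P.complex.X 2 ⟶ Y) :=
      ⟨fun a b => (twoComplex_X_isZero d 0).eq_of_src a b⟩
    exact @ModuleCat.isZero_of_subsingleton ℤ _ (L.X 2) hs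
  rw [h1, HomologicalComplex.exactAt_iff' L 0 1 2 (by simp) (by simp),
    ShortComplex.exact_iff_epi _ (hz.eq_of_tgt _ _), ModuleCat.epi_iff_surjective]
  have key : ∀ (ψ : F ⟶ Y), (HomologicalComplex.sc' L 0 1 2).f ψ = d ≫ ψ := by
    intro ψ
    show P.complex.d 1 0 ≫ ψ = d ≫ ψ
    congr 1
    exact twoComplex_d10 d
  constructor
  · intro h φ
    obtain ⟨ψ, hψ⟩ := h φ
    exact ⟨ψ, (key ψ).symm.trans hψ⟩
  · intro h φ
    obtain ⟨ψ, hψ⟩ := h φ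
    exact ⟨ψ, (key ψ).trans hψ⟩

end TwoStep

lemma aux_free (H : Type) [Ring H] (M : Type u) [AddCommGroup M] [Module H M]
    [Module.Finite H M] :
    ∃ (n : ℕ) (p : (ULift.{u} (Fin n → H)) →ₗ[H] M), Function.Surjective p := by
  obtain ⟨n, p0, hp0⟩ := Module.Finite.exists_fin' H M
  exact ⟨n, p0 ∘ₗ ULift.moduleEquiv.toLinearMap,
    hp0.comp (ULift.moduleEquiv (R := H) (M := Fin n → H)).surjective⟩

noncomputable def aux_basis (H : Type) [Ring H] (n : ℕ) :
    Module.Basis (Fin n) H (ULift.{u} (Fin n → H)) :=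
  (Pi.basisFun H (Fin n)).map ULift.moduleEquiv.symm

/-- Transfer of hereditariness across universes: a submodule of a `ULift`ed
finite free module is a projective module, assuming submodules of projectives are
projective in some (other) universe. -/
lemma aux_hered.{r, w} (H : Type) [Ring H]
    (hher : ∀ Q : ModuleCat.{r} H, CategoryTheory.Projective Q →
      ∀ U : Submodule H Q, CategoryTheory.Projective (ModuleCat.of H U))
    (n : ℕ) (U : Submodule H (ULift.{w} (Fin n → H))) :
    Module.Projective H ↥U := by
  let e : ULift.{w} (Fin n → H) ≃ₗ[H] ULift.{r} (Fin n → H) :=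
    ULift.moduleEquiv.trans ULift.moduleEquiv.symm
  let U' : Submodule H (ULift.{r} (Fin n → H)) := U.map (e : ULift.{w} (Fin n → H) →ₗ[H] ULift.{r} (Fin n → H))
  have hQ : CategoryTheory.Projective (ModuleCat.of H (ULift.{r} (Fin n → H))) :=
    ModuleCat.projective_of_free (aux_basis H n)
  haveI hU' : Module.Projective H ↥(U.map (e : ULift.{w} (Fin n → H) →ₗ[H]
      ULift.{r} (Fin n → H))) :=
    (IsProjective.iff_projective _).2 (hher _ hQ U')
  exact Module.Projective.of_equiv (e.submoduleMap U).symm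

/-- Let `H` be a finite dimensional hereditary algebra, `N` an exceptional module
(`Ext¹(N,N) = 0`), `P` a projective module and `tP = t_N(P)` the trace of `N` in `P`.
Then `Ext¹(N, tP) = 0`, and consequently `Hom(N, P/tP) = 0`. -/
theorem stmt16 (k : Type) [Field k] (H : Type) [Ring H] [Algebra k H]
    [FiniteDimensional k H]
    (hher : ∀ Q : ModuleCat H, Projective Q →
      ∀ U : Submodule H Q, Projective (ModuleCat.of H U))
    (N P : ModuleCat H) [Module.Finite H N] [Module.Finite H P]
    (hN : Limits.IsZero (ext1 H N N))
    (hP : Projective P) :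
    Limits.IsZero (ext1 H N (ModuleCat.of H ↥(traceSub H N P))) ∧
      ∀ f : N →ₗ[H] (P ⧸ traceSub H N P), f = 0 := by
  classical
  -- `H` is Noetherian, so the trace is finitely generated.
  haveI : IsNoetherianRing H :=
    isNoetherian_of_tower k (IsNoetherian.iff_fg.2 (inferInstance))
  haveI : IsNoetherian H P := isNoetherian_of_isNoetherianRing_of_finite H P
  set T : Submodule H P := traceSub H N P with hT
  -- free presentation of `N`
  obtain ⟨n, p0, hp0⟩ := aux_free H ↑N
  let Fm : ModuleCat H := ModuleCat.of H (ULift (Fin n → H))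
  let Km : ModuleCat H := ModuleCat.of H ↥(LinearMap.ker p0)
  let dm : Km ⟶ Fm := ModuleCat.ofHom (LinearMap.ker p0).subtype
  let pm : Fm ⟶ N := ModuleCat.ofHom p0
  haveI hMono : Mono dm :=
    (ModuleCat.mono_iff_injective dm).2 (Submodule.injective_subtype _)
  haveI hEpi : Epi pm := (ModuleCat.epi_iff_surjective pm).2 hp0
  have hdp : dm ≫ pm = 0 := by
    ext x
    exact x.2
  have hex : (ShortComplex.mk dm pm hdp).Exact := by
    rw [ShortComplex.moduleCat_exact_iff]
    intro x hx
    exact ⟨⟨x, hx⟩, rfl⟩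
  have hFproj : Projective Fm := ModuleCat.projective_of_free (aux_basis H n)
  have hKproj : Projective Km :=
    (IsProjective.iff_projective _).1 (aux_hered H hher n (LinearMap.ker p0))
  have ext1iff := fun (Y : ModuleCat H) => isZero_ext1_iff dm pm hdp hex hKproj hFproj Y
  -- extension property against `N`
  have hEN : ∀ φ : Km ⟶ N, ∃ ψ : Fm ⟶ N, dm ≫ ψ = φ := (ext1iff N).1 hN
  -- the trace is an epimorphic image of finitely many copies of `N`
  have hTfg : T.FG := IsNoetherian.noetherian T
  obtain ⟨s, hs⟩ := CompleteLattice.IsCompactElement.exists_finset_of_le_iSup _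
      ((Submodule.fg_iff_compact T).1 hTfg) (fun g : ↑N →ₗ[H] ↑P => LinearMap.range g) hT.le
  let q0 : (↥s → ↑N) →ₗ[H] ↑P := ∑ i : ↥s, (i.1).comp (LinearMap.proj i)
  have hq0le : LinearMap.range q0 ≤ T := by
    rintro _ ⟨v, rfl⟩
    have : q0 v = ∑ i : ↥s, i.1 (v i) := by
      simp [q0, LinearMap.sum_apply]
    rw [this]
    exact Submodule.sum_mem _ (fun i _ => (le_iSup (fun g : ↑N →ₗ[H] ↑P =>
      LinearMap.range g) i.1) ⟨v i, rfl⟩)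
  have hq0ge : T ≤ LinearMap.range q0 := by
    refine hs.trans ?_
    refine iSup_le fun g => iSup_le fun hg => ?_
    rintro _ ⟨x, rfl⟩
    refine ⟨(Pi.single (⟨g, hg⟩ : ↥s) x : ↥s → ↑N), ?_⟩
    have : q0 (Pi.single (⟨g, hg⟩ : ↥s) x : ↥s → ↑N) =
        ∑ i : ↥s, i.1 ((Pi.single (⟨g, hg⟩ : ↥s) x : ↥s → ↑N) i) := by
      simp [q0, LinearMap.sum_apply]
    rw [this, Fintype.sum_eq_single (⟨g, hg⟩ : ↥s) (fun i hi => ?_), Pi.single_eq_same]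
    rw [Pi.single_eq_of_ne hi, map_zero]
  let q : (↥s → ↑N) →ₗ[H] ↥T := q0.codRestrict T (fun v => hq0le ⟨v, rfl⟩)
  have hqsurj : Function.Surjective q := by
    rintro ⟨x, hx⟩
    obtain ⟨v, hv⟩ := hq0ge hx
    exact ⟨v, Subtype.ext hv⟩
  haveI hKmod : Module.Projective H ↥(LinearMap.ker p0) :=
    (IsProjective.iff_projective _).2 hKproj
  -- extension property against the trace
  have hET : ∀ φ : (↥(LinearMap.ker p0)) →ₗ[H] ↥T,
      ∃ ψ : (ULift (Fin n → H)) →ₗ[H] ↥T, ψ.comp (LinearMap.ker p0).subtype = φ := by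
    intro φ
    obtain ⟨ψ', hψ'⟩ := Module.projective_lifting_property q φ hqsurj
    choose Ψ hΨ using fun i : ↥s => hEN (ModuleCat.ofHom ((LinearMap.proj i).comp ψ'))
    refine ⟨q.comp (LinearMap.pi (fun i => (Ψ i).hom)), ?_⟩
    apply LinearMap.ext
    intro x
    have h1 : (LinearMap.pi (fun i => (Ψ i).hom)).comp (LinearMap.ker p0).subtype x = ψ' x := by
      funext i
      exact LinearMap.congr_fun (congrArg ModuleCat.Hom.hom (hΨ i)) x
    have hmain : q ((LinearMap.pi (fun i => (Ψ i).hom)) ((LinearMap.ker p0).subtype x)) = φ x := by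
      calc q ((LinearMap.pi (fun i => (Ψ i).hom)) ((LinearMap.ker p0).subtype x))
          = q (ψ' x) := by rw [← h1]; rfl
        _ = φ x := by rw [← hψ']; rfl
    exact hmain
  constructor
  · exact (ext1iff (ModuleCat.of H ↥T)).2 (fun φ => let ⟨ψ, hψ⟩ := hET φ.hom; ⟨ModuleCat.ofHom ψ, by ext x; exact congrArg Subtype.val (LinearMap.congr_fun hψ x)⟩)
  · intro f
    haveI : Module.Projective H (ULift (Fin n → H)) :=
      Module.Projective.of_basis (aux_basis H n)
    obtain ⟨h, hh⟩ := Module.projective_lifting_property T.mkQ (f.comp p0)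
      (Submodule.mkQ_surjective T)
    have hmem : ∀ x : ↥(LinearMap.ker p0), h x.1 ∈ T := by
      intro x
      have : T.mkQ (h x.1) = f (p0 x.1) := LinearMap.congr_fun hh x.1
      rw [x.2, map_zero] at this
      exact (Submodule.Quotient.mk_eq_zero T).1 this
    obtain ⟨e, he⟩ := hET (LinearMap.codRestrict T (h.comp (LinearMap.ker p0).subtype)
      hmem)
    set g' : _ →ₗ[H] ↑P := h - T.subtype.comp e with hg'
    have hker : LinearMap.ker p0 ≤ LinearMap.ker g' := by
      intro x hx
      have he' : e x = LinearMap.codRestrict T (h.comp (LinearMap.ker p0).subtype) hmem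
          (⟨x, hx⟩ : ↥(LinearMap.ker p0)) := by
        rw [← he]; rfl
      have : (e x : ↑P) = h x := by rw [he']; rfl
      simp [hg', LinearMap.mem_ker, this]
    -- factor `g'` through `N`
    let lq := (LinearMap.ker p0).liftQ g' hker
    let g : ↑N →ₗ[H] ↑P :=
      lq.comp (p0.quotKerEquivOfSurjective hp0).symm.toLinearMap
    -- `g'` lands in `T`, since it factors through `g : N →ₗ P`
    have hrange' : ∀ x, g' x ∈ T := by
      intro x
      have hgx : g ((p0.quotKerEquivOfSurjective hp0) ((LinearMap.ker p0).mkQ x))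
          = g' x := by
        show lq ((p0.quotKerEquivOfSurjective hp0).symm
          ((p0.quotKerEquivOfSurjective hp0) ((LinearMap.ker p0).mkQ x))) = g' x
        rw [LinearEquiv.symm_apply_apply]
        simp [lq]
      have : g' x ∈ LinearMap.range g := ⟨_, hgx⟩
      exact (le_iSup (fun g : ↑N →ₗ[H] ↑P => LinearMap.range g) g) this
    ext y
    obtain ⟨x, rfl⟩ := hp0 y
    have h4 : f (p0 x) = T.mkQ (h x) := (LinearMap.congr_fun hh x).symm
    have h5 : h x = g' x + (e x : ↑P) := by simp [hg']
    rw [h4, h5, map_add]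
    have h6 : T.mkQ (g' x) = 0 := (Submodule.Quotient.mk_eq_zero T).2 (hrange' x)
    have h7 : T.mkQ (e x : ↑P) = 0 := (Submodule.Quotient.mk_eq_zero T).2 (e x).2
    rw [h6, h7, add_zero]
    rfl
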